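/- Let G be a finite group of order 2m where m > 1 is odd. Then o(G) ≥ 3.42, unless G is isomorphic to the generalized dihedral group D(C3^k) for some k (i.e., the group C3^k ⋊ C2 with the inverting action), or G ≅ D10, the dihedral group of order 10. -/

import Mathlib

/-- `psi G` is the sum of the orders of the elements of `G`. -/
noncomputable def psi (G : Type*) [Group G] : ℕ := ∑ᶠ x : G, orderOf x

/-- `avgO G` is the average order of the elements of `G`. -/
noncomputable def avgO (G : Type*) [Group G] : ℚ := psi G / Nat.card G

/-- The generalized dihedral group of an abelian group `A`:
elements `r a` form a copy of `A`, elements `sr a` are the reflections,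
and conjugation by any reflection inverts `A`. -/
inductive GDih (A : Type*) : Type _
  | r : A → GDih A
  | sr : A → GDih A

namespace GDih
variable {A : Type*} [CommGroup A]

def mul : GDih A → GDih A → GDih A
  | r a, r b => r (a * b)
  | r a, sr b => sr (b * a⁻¹)
  | sr a, r b => sr (a * b)
  | sr a, sr b => r (b * a⁻¹)

instance : Mul (GDih A) := ⟨mul⟩
instance : One (GDih A) := ⟨r 1⟩
instance : Inv (GDih A) := ⟨fun x => match x with
  | r a => r a⁻¹
  | sr a => sr a⟩

theorem mul_def (x y : GDih A) : x * y = mul x y := rfl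
theorem one_def : (1 : GDih A) = r 1 := rfl

instance : Group (GDih A) where
  mul_assoc := by
    rintro (a | a) (b | b) (c | c) <;>
      simp only [mul_def, mul] <;> congr 1 <;>
      simp [mul_assoc, mul_comm, mul_left_comm]
  one_mul := by rintro (a | a) <;> simp [mul_def, mul, one_def]
  mul_one := by rintro (a | a) <;> simp [mul_def, mul, one_def]
  inv_mul_cancel := by rintro (a | a) <;> simp [mul_def, mul, one_def]

end GDih

namespace GDih
variable {A : Type*} [CommGroup A]

@[simp] theorem r_mul_r (a b : A) : r a * r b = r (a * b) := rfl
@[simp] theorem r_mul_sr (a b : A) : r a * sr b = sr (b * a⁻¹) := rfl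
@[simp] theorem sr_mul_r (a b : A) : sr a * r b = sr (a * b) := rfl
@[simp] theorem sr_mul_sr (a b : A) : sr a * sr b = r (b * a⁻¹) := rfl

/-- functoriality of GDih in MulEquiv -/
def congr {B : Type*} [CommGroup B] (e : A ≃* B) : GDih A ≃* GDih B where
  toFun x := match x with
    | r a => r (e a)
    | sr a => sr (e a)
  invFun x := match x with
    | r b => r (e.symm b)
    | sr b => sr (e.symm b)
  left_inv := by rintro (a | a) <;> simp
  right_inv := by rintro (b | b) <;> simp
  map_mul' := by rintro (a | a) (b | b) <;> simp

/-- GDih of cyclic group is dihedral -/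
def toDihedral (n : ℕ) : GDih (Multiplicative (ZMod n)) ≃* DihedralGroup n where
  toFun x := match x with
    | r a => DihedralGroup.r a.toAdd
    | sr a => DihedralGroup.sr a.toAdd
  invFun x := match x with
    | DihedralGroup.r i => r (Multiplicative.ofAdd i)
    | DihedralGroup.sr i => sr (Multiplicative.ofAdd i)
  left_inv := by rintro (a | a) <;> simp
  right_inv := by rintro (i | i) <;> simp
  map_mul' := by
    rintro (a | a) (b | b) <;>
      simp [DihedralGroup.r_mul_r, DihedralGroup.r_mul_sr, DihedralGroup.sr_mul_r,
        DihedralGroup.sr_mul_sr, sub_eq_add_neg, toAdd_mul, toAdd_inv]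

end GDih

/-- a commgroup is mul-equiv to Multiplicative of its Additive -/
def mulMultAdd (H : Type*) [CommGroup H] : H ≃* Multiplicative (Additive H) where
  toFun h := Multiplicative.ofAdd (Additive.ofMul h)
  invFun x := Additive.toMul (Multiplicative.toAdd x)
  left_inv _ := rfl
  right_inv _ := rfl
  map_mul' _ _ := rfl



section AuxCommGroup

open Finset
open scoped Classical

variable {A : Type*} [CommGroup A] [Fintype A]

/-- the subgroup of elements killed by k -/
def powEq (A : Type*) [CommGroup A] (k : ℕ) : Subgroup A where
  carrier := {a | a ^ k = 1}
  one_mem' := one_pow k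
  mul_mem' := by intro a b ha hb; simp only [Set.mem_setOf_eq, mul_pow] at *; rw [ha, hb, mul_one]
  inv_mem' := by intro a ha; simp only [Set.mem_setOf_eq, inv_pow] at *; rw [ha, inv_one]

omit [Fintype A] in
lemma mem_powEq {k : ℕ} {a : A} : a ∈ powEq A k ↔ a ^ k = 1 := Iff.rfl

lemma card_powEq (k : ℕ) :
    (univ.filter (fun a : A => a ^ k = 1)).card = Nat.card (powEq A k) := by
  have : Nat.card (powEq A k) = Nat.card {a : A // a ^ k = 1} := rfl
  rw [this, Nat.card_eq_fintype_card]
  rw [Fintype.card_subtype]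

lemma powEq_card_dvd (k : ℕ) : Nat.card (powEq A k) ∣ Fintype.card A := by
  simpa [Nat.card_eq_fintype_card] using Subgroup.card_subgroup_dvd_card (powEq A k)

omit [CommGroup A] [Fintype A] in
lemma sum_orderOf_ge {A : Type*} [Group A] {S : Finset A} (h1 : (1 : A) ∈ S) (c : ℕ)
    (hmin : ∀ a ∈ S, a ≠ 1 → c ≤ orderOf a) :
    c * S.card ≤ (∑ a ∈ S, orderOf a) + (c - 1) := by
  have hsum : (∑ a ∈ S.erase 1, orderOf a) + orderOf (1 : A) = ∑ a ∈ S, orderOf a :=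
    Finset.sum_erase_add S _ h1
  have hb : c * (S.erase 1).card ≤ ∑ a ∈ S.erase 1, orderOf a := by
    simpa [mul_comm] using Finset.card_nsmul_le_sum (S.erase 1) orderOf c
      (fun a ha => hmin a (Finset.mem_of_mem_erase ha) (Finset.ne_of_mem_erase ha))
  have hcard : (S.erase 1).card = S.card - 1 := Finset.card_erase_of_mem h1
  have hpos : 1 ≤ S.card := Finset.card_pos.2 ⟨1, h1⟩
  have h1' : orderOf (1 : A) = 1 := orderOf_one
  rcases Nat.exists_eq_add_of_le hpos with ⟨d, hd⟩
  rw [hd] at hcard ⊢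
  rw [hcard] at hb
  simp only [Nat.add_sub_cancel_left] at hb
  rcases Nat.eq_zero_or_pos c with rfl | hc
  · simp
  · calc c * (1 + d) = c * d + c := by ring
    _ ≤ (∑ a ∈ S.erase 1, orderOf a) + c := by omega
    _ = (∑ a ∈ S.erase 1, orderOf a) + 1 + (c-1) := by omega
    _ = (∑ a ∈ S, orderOf a) + (c - 1) := by rw [← hsum, h1']

theorem psi_comm_lower (hodd : Odd (Fintype.card A)) (hA3 : 3 ≤ Fintype.card A)
    (h3 : ∃ a : A, a ^ 3 ≠ 1) (h5 : Fintype.card A ≠ 5) :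
    121 * Fintype.card A ≤ 25 * ∑ a : A, orderOf a := by
  classical
  haveI f3p : Fact (Nat.Prime 3) := ⟨by norm_num⟩
  haveI f5p : Fact (Nat.Prime 5) := ⟨by norm_num⟩
  have hnev : ¬ Even (Fintype.card A) := Nat.not_even_iff_odd.mpr hodd
  have hordodd : ∀ a : A, Odd (orderOf a) := by
    intro a
    rcases Nat.even_or_odd (orderOf a) with he | ho
    · exact absurd (even_iff_two_dvd.mpr ((even_iff_two_dvd.mp he).trans orderOf_dvd_card)) hnev
    · exact ho
  -- element-order facts
  have hord3 : ∀ a : A, a ≠ 1 → a ^ 3 = 1 → orderOf a = 3 := fun a ha h =>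
    orderOf_eq_prime h ha
  have hord5 : ∀ a : A, a ^ 3 ≠ 1 → a ^ 15 = 1 → 5 ≤ orderOf a := by
    intro a h3a h15a
    have hdvd : orderOf a ∣ 15 := orderOf_dvd_of_pow_eq_one h15a
    have h1 : orderOf a ≠ 1 := by
      intro h; rw [orderOf_eq_one_iff] at h; exact h3a (by rw [h, one_pow])
    have h3' : orderOf a ≠ 3 := by
      intro h; exact h3a (by rw [← h]; exact pow_orderOf_eq_one a)
    have hub : orderOf a ≤ 15 := Nat.le_of_dvd (by norm_num) hdvd
    have hlb : 1 ≤ orderOf a := orderOf_pos a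
    interval_cases h : orderOf a <;> omega
  have hord7 : ∀ a : A, a ^ 15 ≠ 1 → 7 ≤ orderOf a := by
    intro a ha
    have hnot : ¬ orderOf a ∣ 15 := fun h => ha (orderOf_dvd_iff_pow_eq_one.mp h)
    have hoddo := hordodd a
    rw [Nat.odd_iff] at hoddo
    by_contra h7
    have hlb : 1 ≤ orderOf a := orderOf_pos a
    have hub : orderOf a ≤ 6 := by omega
    interval_cases h : orderOf a <;> omega
  set M := Fintype.card A with hM
  set F3 : Finset A := univ.filter (fun a => a ^ 3 = 1) with hF3
  have h1F3 : (1 : A) ∈ F3 := by simp [hF3]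
  have hS3min : ∀ a ∈ F3, a ≠ 1 → 3 ≤ orderOf a := by
    intro a ha hne
    rw [hF3, mem_filter] at ha
    rw [hord3 a hne ha.2]
  have hS3 : 3 * F3.card ≤ (∑ a ∈ F3, orderOf a) + 2 := sum_orderOf_ge h1F3 3 hS3min
  by_cases hall : ∀ a : A, a ^ 15 = 1
  · -- exponent divides 15
    set F5 : Finset A := univ.filter (fun a => a ^ 5 = 1) with hF5
    have h1F5 : (1 : A) ∈ F5 := by simp [hF5]
    have hS5 : 5 * F5.card ≤ (∑ a ∈ F5, orderOf a) + 4 := by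
      refine sum_orderOf_ge h1F5 5 ?_
      intro a ha hne
      rw [hF5, mem_filter] at ha
      rw [orderOf_eq_prime ha.2 hne]
    have hmapsi : ∀ p : A × A, p ∈ F3 ×ˢ F5 → p.1 * p.2 ∈ (univ : Finset A) := by
      intros; exact mem_univ _
    have hmapsj : ∀ a : A, a ∈ (univ : Finset A) → ((a ^ 10, a ^ 6) : A × A) ∈ F3 ×ˢ F5 := by
      intro a _
      rw [mem_product]
      constructor
      · rw [hF3, mem_filter]
        refine ⟨mem_univ _, ?_⟩
        calc (a ^ 10) ^ 3 = (a ^ 15) ^ 2 := by rw [← pow_mul, ← pow_mul]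
        _ = 1 := by rw [hall a, one_pow]
      · rw [hF5, mem_filter]
        refine ⟨mem_univ _, ?_⟩
        calc (a ^ 6) ^ 5 = (a ^ 15) ^ 2 := by rw [← pow_mul, ← pow_mul]
        _ = 1 := by rw [hall a, one_pow]
    have hleft : ∀ p : A × A, p ∈ F3 ×ˢ F5 → ((p.1 * p.2) ^ 10, (p.1 * p.2) ^ 6) = p := by
      rintro ⟨u, v⟩ hp
      rw [mem_product, hF3, hF5, mem_filter, mem_filter] at hp
      obtain ⟨⟨-, hu⟩, ⟨-, hv⟩⟩ := hp
      have hu10 : u ^ 10 = u := by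
        calc u ^ 10 = (u ^ 3) ^ 3 * u := by rw [← pow_mul, ← pow_succ]
        _ = u := by rw [hu, one_pow, one_mul]
      have hv10 : v ^ 10 = 1 := by
        calc v ^ 10 = (v ^ 5) ^ 2 := by rw [← pow_mul]
        _ = 1 := by rw [hv, one_pow]
      have hu6 : u ^ 6 = 1 := by
        calc u ^ 6 = (u ^ 3) ^ 2 := by rw [← pow_mul]
        _ = 1 := by rw [hu, one_pow]
      have hv6 : v ^ 6 = v := by
        calc v ^ 6 = (v ^ 5) * v := by rw [← pow_succ]
        _ = v := by rw [hv, one_mul]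
      simp only [Prod.mk.injEq, mul_pow]
      rw [hu10, hv10, hu6, hv6, mul_one, one_mul]
      exact ⟨rfl, rfl⟩
    have hright : ∀ a : A, a ∈ (univ : Finset A) → (a ^ 10) * (a ^ 6) = a := by
      intro a _
      rw [← pow_add]
      calc a ^ 16 = a * a ^ 15 := by rw [← pow_succ']
      _ = a := by rw [hall a, mul_one]
    have hcardprod : F3.card * F5.card = M := by
      rw [hM, ← Finset.card_univ, ← Finset.card_product]
      exact Finset.card_nbij' (fun p : A × A => p.1 * p.2) (fun a : A => (a ^ 10, a ^ 6))
        hmapsi hmapsj hleft hright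
    have hsumprod : (∑ a ∈ F3, orderOf a) * (∑ a ∈ F5, orderOf a) = ∑ a : A, orderOf a := by
      rw [Finset.sum_mul_sum]
      rw [← Finset.sum_product']
      refine Finset.sum_nbij' (fun p : A × A => p.1 * p.2) (fun a : A => (a ^ 10, a ^ 6))
        hmapsi hmapsj hleft hright ?_
      rintro ⟨u, v⟩ hp
      rw [mem_product, hF3, hF5, mem_filter, mem_filter] at hp
      obtain ⟨⟨-, hu⟩, ⟨-, hv⟩⟩ := hp
      have hco : Nat.Coprime (orderOf u) (orderOf v) := by
        have h3d : orderOf u ∣ 3 := orderOf_dvd_of_pow_eq_one hu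
        have h5d : orderOf v ∣ 5 := orderOf_dvd_of_pow_eq_one hv
        exact Nat.Coprime.coprime_dvd_left h3d (Nat.Coprime.coprime_dvd_right h5d (by norm_num))
      exact ((Commute.all u v).orderOf_mul_eq_mul_orderOf_of_coprime hco).symm
    obtain ⟨a0, ha0⟩ := h3
    have hb5 : (a0 ^ 3) ^ 5 = 1 := by rw [← pow_mul]; exact hall a0
    have hordb : orderOf (a0 ^ 3) = 5 := orderOf_eq_prime hb5 ha0
    have h5dvd : 5 ∣ F5.card := by
      rw [hF5, card_powEq]
      have hle : Subgroup.zpowers (a0 ^ 3) ≤ powEq A 5 := by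
        rw [Subgroup.zpowers_le]
        exact hb5
      have := Subgroup.card_dvd_of_le hle
      rwa [Nat.card_zpowers, hordb] at this
    by_cases he3 : F3.card = 1
    · have hF3eq : F3 = {1} := by
        apply Finset.eq_singleton_iff_unique_mem.mpr
        refine ⟨h1F3, ?_⟩
        intro x hx
        by_contra hxne
        have h2 : 1 < F3.card := Finset.one_lt_card.mpr ⟨x, hx, 1, h1F3, hxne⟩
        omega
      have hS3eq : (∑ a ∈ F3, orderOf a) = 1 := by rw [hF3eq]; simp
      have hMe5 : M = F5.card := by rw [← hcardprod, he3, one_mul]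
      have hne15 : F5.card ≠ 15 := by
        intro h15
        have h3M : 3 ∣ Fintype.card A := by rw [← hM, hMe5, h15]; norm_num
        obtain ⟨x, hx⟩ := exists_prime_orderOf_dvd_card 3 h3M
        have hx3 : x ^ 3 = 1 := by rw [← hx]; exact pow_orderOf_eq_one x
        have hxne : x ≠ 1 := by
          intro h; rw [h, orderOf_one] at hx; omega
        have : x ∈ F3 := by rw [hF3, mem_filter]; exact ⟨mem_univ _, hx3⟩
        rw [hF3eq, Finset.mem_singleton] at this
        exact hxne this
      have hoddM : ¬ 2 ∣ M := by rw [Nat.odd_iff] at hodd; omega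
      have h25 : 25 ≤ F5.card := by
        have h5M : F5.card ≠ 5 := by rw [← hMe5]; exact h5
        have h2 : ¬ 2 ∣ F5.card := by rw [hMe5] at hoddM; exact hoddM
        omega
      rw [← hsumprod, hS3eq, one_mul, hMe5]
      omega
    · have h3dvd : 3 ∣ F3.card := by
        have h2 : 1 < F3.card := by
          have : 1 ≤ F3.card := Finset.card_pos.2 ⟨1, h1F3⟩
          omega
        obtain ⟨x, hx, hxne⟩ := Finset.exists_mem_ne h2 1
        rw [hF3, mem_filter] at hx
        have hordx : orderOf x = 3 := hord3 x hxne hx.2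
        rw [hF3, card_powEq]
        have hle : Subgroup.zpowers x ≤ powEq A 3 := by
          rw [Subgroup.zpowers_le]; exact hx.2
        have := Subgroup.card_dvd_of_le hle
        rwa [Nat.card_zpowers, hordx] at this
      have he3ge : 3 ≤ F3.card := by
        have : 1 ≤ F3.card := Finset.card_pos.2 ⟨1, h1F3⟩
        omega
      have he5ge : 5 ≤ F5.card := by
        have : 1 ≤ F5.card := Finset.card_pos.2 ⟨1, h1F5⟩
        omega
      rw [← hsumprod, ← hcardprod]
      set x := F3.card
      set y := F5.card
      set S := ∑ a ∈ F3, orderOf a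
      set T := ∑ a ∈ F5, orderOf a
      have hSz : (3 : ℤ) * x ≤ (S : ℤ) + 2 := by exact_mod_cast hS3
      have hTz : (5 : ℤ) * y ≤ (T : ℤ) + 4 := by exact_mod_cast hS5
      have hxz : (3 : ℤ) ≤ x := by exact_mod_cast he3ge
      have hyz : (5 : ℤ) ≤ y := by exact_mod_cast he5ge
      have hSnn : (0 : ℤ) ≤ S := Int.ofNat_nonneg S
      have hTnn : (0 : ℤ) ≤ T := Int.ofNat_nonneg T
      have goal : (121 : ℤ) * (x * y) ≤ 25 * (S * T) := by
        nlinarith [mul_le_mul hSz hTz (by nlinarith) (by nlinarith),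
          mul_nonneg (sub_nonneg.mpr hxz) (sub_nonneg.mpr hyz), mul_le_mul hxz hyz (by nlinarith) (by nlinarith)]
      exact_mod_cast goal
  · -- some element of order not dividing 15
    push_neg at hall
    set F15 : Finset A := univ.filter (fun a => a ^ 15 = 1) with hF15
    have hsub35 : F3 ⊆ F15 := by
      intro a ha
      rw [hF3, mem_filter] at ha
      rw [hF15, mem_filter]
      refine ⟨mem_univ _, ?_⟩
      calc a ^ 15 = (a ^ 3) ^ 5 := by rw [← pow_mul]
      _ = 1 := by rw [ha.2, one_pow]
    have he3le : F3.card ≤ F15.card := Finset.card_le_card hsub35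
    have h15dvd : F15.card ∣ M := by
      rw [hF15, card_powEq]; exact powEq_card_dvd 15
    have h15ne : F15.card ≠ M := by
      intro h
      have : F15 = univ := Finset.eq_univ_of_card _ (by rw [h, hM])
      obtain ⟨a, ha⟩ := hall
      have : a ∈ F15 := this ▸ mem_univ a
      rw [hF15, mem_filter] at this
      exact ha this.2
    have h3e15 : 3 * F15.card ≤ M := by
      obtain ⟨d, hd⟩ := h15dvd
      have hd1 : d ≠ 1 := by intro h; rw [h, mul_one] at hd; exact h15ne hd.symm
      have hd0 : d ≠ 0 := by
        intro h; rw [h, mul_zero] at hd; omega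
      have hdodd : ¬ 2 ∣ d := by
        intro h2
        rw [Nat.odd_iff] at hodd
        have h2M : 2 ∣ M := hd ▸ Dvd.dvd.mul_left h2 F15.card
        omega
      have hd3 : 3 ≤ d := by omega
      calc 3 * F15.card ≤ d * F15.card := Nat.mul_le_mul hd3 (le_refl _)
      _ = M := by rw [mul_comm]; exact hd.symm
    -- split the sum into three parts
    have hsplit : ∑ a : A, orderOf a =
        (∑ a ∈ F15, orderOf a) + ∑ a ∈ univ.filter (fun a : A => ¬ a ^ 15 = 1), orderOf a := by
      rw [hF15]
      exact (Finset.sum_filter_add_sum_filter_not univ (fun a : A => a ^ 15 = 1) orderOf).symm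
    have hsplit2 : ∑ a ∈ F15, orderOf a =
        (∑ a ∈ F3, orderOf a) + ∑ a ∈ F15.filter (fun a => ¬ a ^ 3 = 1), orderOf a := by
      have : F15.filter (fun a => a ^ 3 = 1) = F3 := by
        ext a
        rw [mem_filter, hF3, hF15, mem_filter, mem_filter]
        constructor
        · rintro ⟨⟨h1, h2⟩, h3⟩; exact ⟨h1, h3⟩
        · rintro ⟨h1, h3⟩
          refine ⟨⟨h1, ?_⟩, h3⟩
          calc a ^ 15 = (a ^ 3) ^ 5 := by rw [← pow_mul]
          _ = 1 := by rw [h3, one_pow]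
      rw [← this]
      exact (Finset.sum_filter_add_sum_filter_not F15 (fun a => a ^ 3 = 1) orderOf).symm
    have hcards2 : F3.card + (F15.filter (fun a => ¬ a ^ 3 = 1)).card = F15.card := by
      have : F15.filter (fun a => a ^ 3 = 1) = F3 := by
        ext a
        rw [mem_filter, hF3, hF15, mem_filter, mem_filter]
        constructor
        · rintro ⟨⟨h1, h2⟩, h3⟩; exact ⟨h1, h3⟩
        · rintro ⟨h1, h3⟩
          refine ⟨⟨h1, ?_⟩, h3⟩
          calc a ^ 15 = (a ^ 3) ^ 5 := by rw [← pow_mul]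
          _ = 1 := by rw [h3, one_pow]
      rw [← this]
      exact Finset.card_filter_add_card_filter_not (fun a => a ^ 3 = 1)
    have hcards1 : F15.card + (univ.filter (fun a : A => ¬ a ^ 15 = 1)).card = M := by
      rw [hM, ← Finset.card_univ (α := A), hF15]
      exact Finset.card_filter_add_card_filter_not (fun a : A => a ^ 15 = 1)
    have hS5' : 5 * (F15.filter (fun a => ¬ a ^ 3 = 1)).card ≤
        ∑ a ∈ F15.filter (fun a => ¬ a ^ 3 = 1), orderOf a := by
      simpa [mul_comm] using Finset.card_nsmul_le_sum (F15.filter (fun a => ¬ a ^ 3 = 1))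
        orderOf 5 (by
          intro a ha
          rw [mem_filter, hF15, mem_filter] at ha
          exact hord5 a ha.2 ha.1.2)
    have hS7 : 7 * (univ.filter (fun a : A => ¬ a ^ 15 = 1)).card ≤
        ∑ a ∈ univ.filter (fun a : A => ¬ a ^ 15 = 1), orderOf a := by
      simpa [mul_comm] using Finset.card_nsmul_le_sum (univ.filter (fun a : A => ¬ a ^ 15 = 1))
        orderOf 7 (by
          intro a ha
          rw [mem_filter] at ha
          exact hord7 a ha.2)
    rw [hsplit, hsplit2]
    omega



end AuxCommGroup

theorem sign_lemma {G : Type*} [Group G] [Fintype G] [DecidableEq G] {m : ℕ}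
    (hodd : Odd m) (hcard : Fintype.card G = 2 * m) {t : G} (ht : orderOf t = 2) :
    Equiv.Perm.sign (MulAction.toPermHom G G t) = -1 := by
  classical
  set σ := MulAction.toPermHom G G t with hσ
  have happ : ∀ x : G, σ x = t * x := fun x => rfl
  have htne : t ≠ 1 := by
    intro h; rw [h, orderOf_one] at ht; omega
  have horder : orderOf σ = 2 := by
    rw [hσ, orderOf_injective (MulAction.toPermHom G G) MulAction.toPerm_injective t, ht]
  have hsupp : σ.support = Finset.univ := by
    ext x
    simp only [Equiv.Perm.mem_support, Finset.mem_univ, iff_true]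
    rw [happ]
    intro h
    exact htne (by
      have := mul_right_cancel (b := x) (a := t) (c := 1)
      rw [one_mul] at this
      exact this h)
  have hcyc : ∀ n ∈ σ.cycleType, n = 2 := by
    intro n hn
    have h2 : 2 ≤ n := Equiv.Perm.two_le_of_mem_cycleType hn
    have hdvd : n ∣ 2 := by
      rw [← horder, ← Equiv.Perm.lcm_cycleType]
      exact Multiset.dvd_lcm hn
    have : n ≤ 2 := Nat.le_of_dvd (by norm_num) hdvd
    omega
  have hrep : σ.cycleType = Multiset.replicate (Multiset.card σ.cycleType) 2 :=
    Multiset.eq_replicate_card.mpr hcyc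
  have hsum : σ.cycleType.sum = 2 * m := by
    rw [Equiv.Perm.sum_cycleType, hsupp, Finset.card_univ, hcard]
  have hcardcyc : Multiset.card σ.cycleType = m := by
    have : σ.cycleType.sum = Multiset.card σ.cycleType * 2 := by
      rw [hrep, Multiset.sum_replicate, smul_eq_mul]
      simp [Multiset.card_replicate]
    omega
  rw [Equiv.Perm.sign_of_cycleType, hsum, hcardcyc]
  have : (2 * m + m) = 2 * m + m := rfl
  have hoddpow : Odd (2 * m + m) := by
    rcases hodd with ⟨j, hj⟩
    exact ⟨3 * j + 1, by omega⟩
  exact Odd.neg_one_pow hoddpow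


set_option maxHeartbeats 1000000 in
open Finset in
theorem avgO_of_card_two_mul_odd {G : Type*} [Group G] [Finite G] (m : ℕ)
    (hodd : Odd m) (hm : 1 < m) (hcard : Nat.card G = 2 * m) :
    (171/50 : ℚ) ≤ avgO G ∨
      (∃ k : ℕ, Nonempty (G ≃* GDih (Multiplicative (Fin k → ZMod 3)))) ∨
      Nonempty (G ≃* DihedralGroup 5) := by
  classical
  haveI : Fintype G := Fintype.ofFinite G
  have hm3 : 3 ≤ m := by rcases hodd with ⟨j, hj⟩; omega
  have hcardF : Fintype.card G = 2 * m := by rw [← Nat.card_eq_fintype_card, hcard]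
  have hGodd : ¬ (2:ℕ) ∣ m := by rw [Nat.odd_iff] at hodd; omega
  haveI f2 : Fact (Nat.Prime 2) := ⟨Nat.prime_two⟩
  obtain ⟨t, ht⟩ := exists_prime_orderOf_dvd_card 2 (by rw [hcardF]; exact ⟨m, rfl⟩)
  have ht2 : t * t = 1 := by
    have h := pow_orderOf_eq_one t; rw [ht, pow_two] at h; exact h
  have htinv : t⁻¹ = t := inv_eq_of_mul_eq_one_right ht2
  set f : G →* ℤˣ := Equiv.Perm.sign.comp (MulAction.toPermHom G G) with hf
  have hft : f t = -1 := sign_lemma hodd hcardF ht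
  set N : Subgroup G := f.ker with hNdef
  have hmem : ∀ x : G, x ∈ N ↔ f x = 1 := fun x => f.mem_ker
  have hrange : f.range = ⊤ := by
    rw [Subgroup.eq_top_iff']
    intro u
    rcases Int.units_eq_one_or u with rfl | rfl
    · exact ⟨1, map_one f⟩
    · exact ⟨t, hft⟩
  have hNcard : Nat.card N = m := by
    have h1 : N.index = 2 := by
      rw [hNdef, Subgroup.index_ker, hrange, Subgroup.card_top,
        Nat.card_eq_fintype_card, Fintype.card_units_int]
    have h2 := Subgroup.card_mul_index N
    rw [h1, hcard] at h2
    omega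
  have hnotmem : ∀ x : G, x ∉ N → f x = -1 := by
    intro x hx
    rcases Int.units_eq_one_or (f x) with h | h
    · exact absurd ((hmem x).mpr h) hx
    · exact h
  have hoddmem : ∀ x : G, Odd (orderOf x) → x ∈ N := by
    intro x hox
    rcases Int.units_eq_one_or (f x) with h | h
    · exact (hmem x).mpr h
    · exfalso
      have h1 : f x ^ orderOf x = 1 := by rw [← map_pow, pow_orderOf_eq_one, map_one]
      rw [h, Odd.neg_one_pow hox] at h1
      exact absurd h1 (by decide)
  have hdvdm : ∀ x : G, x ∈ N → orderOf x ∣ m := by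
    intro x hx
    have h1 : orderOf (⟨x, hx⟩ : N) ∣ Nat.card N := orderOf_dvd_natCard _
    rwa [Subgroup.orderOf_mk, hNcard] at h1
  have hmemodd : ∀ x : G, x ∈ N → Odd (orderOf x) := by
    intro x hx
    rcases Nat.even_or_odd (orderOf x) with he | ho
    · exact absurd ((even_iff_two_dvd.mp he).trans (hdvdm x hx)) hGodd
    · exact ho
  have htnotmem : t ∉ N := by
    intro h
    have h1 := (hmem t).mp h
    rw [hft] at h1
    exact absurd h1 (by decide)
  have hone : (1 : G) ∈ N := N.one_mem
  set Nf : Finset G := Finset.univ.filter (· ∈ N) with hNf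
  have hNfmem : ∀ x : G, x ∈ Nf ↔ x ∈ N := by
    intro x; rw [hNf, Finset.mem_filter]; simp
  have hNfcard : Nf.card = m := by
    rw [hNf, ← Fintype.card_subtype, ← Nat.card_eq_fintype_card]
    exact hNcard
  have h1Nf : (1:G) ∈ Nf := (hNfmem 1).mpr hone
  have hsq : ∀ x ∈ N, ∀ y ∈ N, x * x = y * y → x = y := by
    intro x hx y hy hxy
    have key : ∀ z, z ∈ N → (z * z) ^ ((m+1)/2) = z := by
      intro z hz
      have hzm : z ^ m = 1 := orderOf_dvd_iff_pow_eq_one.mp (hdvdm z hz)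
      rw [← pow_two, ← pow_mul]
      have h2 : 2 * ((m+1)/2) = m + 1 := by rcases hodd with ⟨j, hj⟩; omega
      rw [h2, pow_succ, hzm, one_mul]
    rw [← key x hx, ← key y hy, hxy]
  set K : Finset G := Nf.filter (fun n => t * n * t = n⁻¹) with hK
  set C : Finset G := Nf.filter (fun n => t * n = n * t) with hC
  have h1C : (1:G) ∈ C := by
    rw [hC, Finset.mem_filter]
    exact ⟨h1Nf, by rw [mul_one, one_mul]⟩
  have hKC : K.card * C.card ≤ m := by
    rw [← hNfcard, ← Finset.card_product]
    apply Finset.card_le_card_of_injOn (fun p => p.1 * p.2)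
    · rintro ⟨k, c⟩ hp
      rw [Finset.mem_coe, Finset.mem_product] at hp
      obtain ⟨hk, hc⟩ := hp
      rw [hK, Finset.mem_filter] at hk
      rw [hC, Finset.mem_filter] at hc
      rw [Finset.mem_coe, hNfmem]
      exact N.mul_mem ((hNfmem k).mp hk.1) ((hNfmem c).mp hc.1)
    · rintro ⟨k, c⟩ hp ⟨k', c'⟩ hp' heq
      rw [Finset.mem_coe, Finset.mem_product] at hp hp'
      obtain ⟨hkK, hcC⟩ := hp
      obtain ⟨hkK', hcC'⟩ := hp'
      rw [hK, Finset.mem_filter] at hkK hkK'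
      rw [hC, Finset.mem_filter] at hcC hcC'
      obtain ⟨hkNf, hkinv⟩ := hkK
      obtain ⟨hkNf', hkinv'⟩ := hkK'
      obtain ⟨hcNf, hccomm⟩ := hcC
      obtain ⟨hcNf', hccomm'⟩ := hcC'
      simp only at heq
      have step : k⁻¹ * c = k'⁻¹ * c' := by
        have c1 : t * (k * c) * t = k⁻¹ * c := by
          calc t * (k * c) * t = t * k * (c * t) := by simp only [mul_assoc]
          _ = t * k * (t * c) := by rw [hccomm]
          _ = t * k * t * c := by rw [← mul_assoc]
          _ = k⁻¹ * c := by rw [hkinv]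
        have c2 : t * (k' * c') * t = k'⁻¹ * c' := by
          calc t * (k' * c') * t = t * k' * (c' * t) := by simp only [mul_assoc]
          _ = t * k' * (t * c') := by rw [hccomm']
          _ = t * k' * t * c' := by rw [← mul_assoc]
          _ = k'⁻¹ * c' := by rw [hkinv']
        rw [← c1, ← c2, heq]
      have hc2 : c = k * (k'⁻¹ * c') := by
        rw [← step, mul_inv_cancel_left]
      have h3 : k * k * k'⁻¹ * c' = k' * c' := by
        calc k * k * k'⁻¹ * c' = k * (k * (k'⁻¹ * c')) := by simp only [mul_assoc]
        _ = k * c := by rw [← hc2]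
        _ = k' * c' := heq
      have hkk : k * k = k' * k' := by
        have h4 : k * k * k'⁻¹ = k' := mul_right_cancel h3
        have h5 := congrArg (fun z => z * k') h4
        simp only [inv_mul_cancel_right] at h5
        exact h5
      have hkeq : k = k' := hsq k ((hNfmem k).mp hkNf) k' ((hNfmem k').mp hkNf') hkk
      have hceq : c = c' := by
        apply mul_left_cancel (a := k)
        rw [hkeq] at heq ⊢
        exact heq
      rw [Prod.mk.injEq]
      exact ⟨hkeq, hceq⟩
  have hCone : C.card = 1 → ∀ n ∈ N, t * n * t = n⁻¹ := by
    intro hc1 n hn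
    have hCeq : C = {1} := by
      obtain ⟨a, ha⟩ := Finset.card_eq_one.mp hc1
      rw [ha] at h1C ⊢
      rw [Finset.mem_singleton] at h1C
      rw [← h1C]
    have hmaps : ∀ x ∈ Nf, x⁻¹ * (t * x * t) ∈ K := by
      intro x hx
      have hxN : x ∈ N := (hNfmem x).mp hx
      have hmemK : x⁻¹ * (t * x * t) ∈ N := by
        rw [hmem]
        have hfx : f x = 1 := (hmem x).mp hxN
        simp only [map_mul, map_inv, hfx, hft]
        decide
      rw [hK, Finset.mem_filter]
      refine ⟨(hNfmem _).mpr hmemK, ?_⟩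
      have lhs : t * (x⁻¹ * (t * x * t)) * t = t * x⁻¹ * t * x := by
        calc t * (x⁻¹ * (t * x * t)) * t = t * x⁻¹ * (t * x * (t * t)) := by
              simp only [mul_assoc]
        _ = t * x⁻¹ * (t * x) := by rw [ht2, mul_one]
        _ = t * x⁻¹ * t * x := by rw [← mul_assoc]
      have rhs : (x⁻¹ * (t * x * t))⁻¹ = t * x⁻¹ * t * x := by
        simp only [mul_inv_rev, htinv, inv_inv]
        simp only [mul_assoc]
      rw [lhs, rhs]
    have hinj : Set.InjOn (fun x => x⁻¹ * (t * x * t)) ↑Nf := by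
      intro x hx y hy hxy
      simp only at hxy
      have h1 : x⁻¹ * (t * x) = y⁻¹ * (t * y) := by
        have h0 := hxy
        rw [show ∀ a : G, a⁻¹ * (t * a * t) = a⁻¹ * (t * a) * t from fun a => by
          simp only [mul_assoc], show y⁻¹ * (t * y * t) = y⁻¹ * (t * y) * t from by
          simp only [mul_assoc]] at h0
        exact mul_right_cancel h0
      have e : y * x⁻¹ * (t * x) = t * y := by
        calc y * x⁻¹ * (t * x) = y * (x⁻¹ * (t * x)) := by rw [mul_assoc]
        _ = y * (y⁻¹ * (t * y)) := by rw [h1]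
        _ = t * y := by rw [mul_inv_cancel_left]
      have h2 : t * (y * x⁻¹) = y * x⁻¹ * t := by
        calc t * (y * x⁻¹) = t * y * x⁻¹ := by rw [mul_assoc]
        _ = y * x⁻¹ * (t * x) * x⁻¹ := by rw [e]
        _ = y * x⁻¹ * t * (x * x⁻¹) := by simp only [mul_assoc]
        _ = y * x⁻¹ * t := by rw [mul_inv_cancel, mul_one]
      have hyx : y * x⁻¹ ∈ C := by
        rw [hC, Finset.mem_filter]
        refine ⟨(hNfmem _).mpr (N.mul_mem ((hNfmem y).mp (Finset.mem_coe.mp hy))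
          (N.inv_mem ((hNfmem x).mp (Finset.mem_coe.mp hx)))), h2⟩
      rw [hCeq, Finset.mem_singleton] at hyx
      exact (mul_inv_eq_one.mp hyx).symm
    have hle : Nf.card ≤ K.card := Finset.card_le_card_of_injOn _ hmaps hinj
    have hKsub : K ⊆ Nf := by
      rw [hK]; exact Finset.filter_subset _ _
    have hKeq : K = Nf := Finset.eq_of_subset_of_card_le hKsub hle
    have hnK : n ∈ K := by rw [hKeq]; exact (hNfmem n).mpr hn
    rw [hK, Finset.mem_filter] at hnK
    exact hnK.2
  -- bound for the sum over N
  have hsumN : 3 * m ≤ (∑ x ∈ Nf, orderOf x) + 2 := by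
    have h := sum_orderOf_ge h1Nf 3 (by
      intro a ha hne
      have hodd' := hmemodd a ((hNfmem a).mp ha)
      have h1 : orderOf a ≠ 1 := fun h => hne (orderOf_eq_one_iff.mp h)
      rcases hodd' with ⟨j, hj⟩
      omega)
    rw [hNfcard] at h
    exact h
  -- conversion to the rational inequality
  have conv : 171 * m ≤ 25 * ∑ x : G, orderOf x → (171/50 : ℚ) ≤ avgO G := by
    intro h
    have hpsi : psi G = ∑ x : G, orderOf x := finsum_eq_sum_of_fintype _
    rw [avgO, hpsi, hcard]
    rw [div_le_div_iff₀ (by norm_num) (by positivity)]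
    have hc : (171:ℚ) * m ≤ 25 * ((∑ x : G, orderOf x : ℕ) : ℚ) := by exact_mod_cast h
    push_cast at hc ⊢
    linarith
  by_cases hC1 : C.card = 1
  · -- generalized dihedral case
    have hinv := hCone hC1
    have hcomm : ∀ a ∈ N, ∀ b ∈ N, a * b = b * a := by
      intro a ha b hb
      have h1 : t * (a * b) * t = (a * b)⁻¹ := hinv _ (N.mul_mem ha hb)
      have h2 : (t * a * t) * (t * b * t) = t * (a * b) * t := by
        calc (t * a * t) * (t * b * t) = t * a * ((t * t) * (b * t)) := by
              simp only [mul_assoc]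
        _ = t * a * (b * t) := by rw [ht2, one_mul]
        _ = t * (a * b) * t := by simp only [mul_assoc]
      have h3 : a⁻¹ * b⁻¹ = (a * b)⁻¹ := by
        rw [← hinv a ha, ← hinv b hb, h2, h1]
      rw [mul_inv_rev] at h3
      have := congrArg (·⁻¹) h3
      simpa [mul_inv_rev] using this.symm
    have houtinv : ∀ x : G, x ∉ N → orderOf x = 2 := by
      intro x hx
      have hxtN : x * t ∈ N := by
        rw [hmem, map_mul, hnotmem x hx, hft]; decide
      have hx1 : x ≠ 1 := fun h => hx (h ▸ hone)
      have hxx : x * x = 1 := by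
        have e : x = x * t * t := by rw [mul_assoc, ht2, mul_one]
        calc x * x = (x * t * t) * (x * t * t) := by rw [← e]
        _ = (x * t) * (t * (x * t) * t) := by simp only [mul_assoc]
        _ = (x * t) * (x * t)⁻¹ := by rw [hinv _ hxtN]
        _ = 1 := mul_inv_cancel _
      exact orderOf_eq_prime (by rw [pow_two]; exact hxx) hx1
    have hcompl_card : Nfᶜ.card = m := by
      rw [Finset.card_compl, hNfcard, hcardF]; omega
    have hsumC : ∑ x ∈ Nfᶜ, orderOf x = 2 * m := by
      have hcompl : ∀ x ∈ Nfᶜ, orderOf x = 2 := fun x hx =>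
        houtinv x (fun h => (Finset.mem_compl.mp hx) ((hNfmem x).mpr h))
      rw [Finset.sum_congr rfl hcompl, Finset.sum_const, hcompl_card, smul_eq_mul]
      ring
    have hpsiG : ∑ x : G, orderOf x = (∑ x ∈ Nf, orderOf x) + 2 * m := by
      rw [← Finset.sum_add_sum_compl Nf orderOf, hsumC]
    -- commutative group structure on N
    letI cg : CommGroup ↥N := { (inferInstance : Group ↥N) with
      mul_comm := fun a b => Subtype.ext (hcomm ↑a a.2 ↑b b.2) }
    have hcardN' : Fintype.card ↥N = m := by
      rw [← Nat.card_eq_fintype_card]; exact hNcard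
    have hpsiN : ∑ a : ↥N, orderOf a = ∑ x ∈ Nf, orderOf x := by
      rw [Finset.sum_subtype Nf hNfmem orderOf]
      apply Finset.sum_congr rfl
      intro a _
      exact (Subgroup.orderOf_coe a).symm
    -- the isomorphism G ≃* GDih ↥N
    have hswap : ∀ a : ↥N, (a:G) * t = t * ((a:G))⁻¹ := by
      intro a
      have h0 := hinv ↑a a.2
      calc (a:G) * t = (t * t) * a * t := by rw [ht2, one_mul]
      _ = t * (t * a * t) := by simp only [mul_assoc]
      _ = t * ((a:G))⁻¹ := by rw [h0]
    let φ : GDih ↥N → G := fun x => match x with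
      | GDih.r a => ↑a
      | GDih.sr a => t * ↑a
    have hφmul : ∀ x y : GDih ↥N, φ (x * y) = φ x * φ y := by
      rintro (a | a) (b | b)
      · show ((a * b : ↥N) : G) = ↑a * ↑b
        rfl
      · show t * ↑(b * a⁻¹) = ↑a * (t * ↑b)
        push_cast
        calc t * (↑b * (↑a)⁻¹) = t * ((↑a)⁻¹ * ↑b) := by
              rw [hcomm ↑b b.2 ((↑a)⁻¹) (N.inv_mem a.2)]
        _ = (t * (↑a)⁻¹) * ↑b := by rw [← mul_assoc]
        _ = (↑a * t) * ↑b := by rw [← hswap]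
        _ = ↑a * (t * ↑b) := by rw [mul_assoc]
      · show t * ↑(a * b) = (t * ↑a) * ↑b
        push_cast
        rw [mul_assoc]
      · show ((b * a⁻¹ : ↥N) : G) = (t * ↑a) * (t * ↑b)
        push_cast
        calc (↑b : G) * (↑a)⁻¹ = (↑a)⁻¹ * ↑b := by
              rw [hcomm ↑b b.2 ((↑a)⁻¹) (N.inv_mem a.2)]
        _ = (t * t) * ((↑a)⁻¹ * ↑b) := by rw [ht2, one_mul]
        _ = t * (t * (↑a)⁻¹) * ↑b := by simp only [mul_assoc]
        _ = t * (↑a * t) * ↑b := by rw [← hswap]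
        _ = (t * ↑a) * (t * ↑b) := by simp only [mul_assoc]
    have hφbij : Function.Bijective φ := by
      constructor
      · rintro (a | a) (b | b) h
        · simp only [φ] at h
          rw [show a = b from Subtype.ext h]
        · exfalso
          simp only [φ] at h
          apply htnotmem
          have : t = ↑a * (↑b)⁻¹ := by
            rw [h]; rw [mul_assoc, mul_inv_cancel, mul_one]
          rw [this]
          exact N.mul_mem a.2 (N.inv_mem b.2)
        · exfalso
          simp only [φ] at h
          apply htnotmem
          have : t = ↑b * (↑a)⁻¹ := by
            rw [← h]; rw [mul_assoc, mul_inv_cancel, mul_one]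
          rw [this]
          exact N.mul_mem b.2 (N.inv_mem a.2)
        · simp only [φ] at h
          rw [show a = b from Subtype.ext (mul_left_cancel h)]
      · intro x
        by_cases hx : x ∈ N
        · exact ⟨GDih.r ⟨x, hx⟩, rfl⟩
        · have htx : t * x ∈ N := by
            rw [hmem, map_mul, hnotmem x hx, hft]; decide
          refine ⟨GDih.sr ⟨t * x, htx⟩, ?_⟩
          show t * (t * x) = x
          rw [← mul_assoc, ht2, one_mul]
    let e : G ≃* GDih ↥N := (MulEquiv.mk' (Equiv.ofBijective φ hφbij) hφmul).symm
    by_cases hexp : ∀ a : ↥N, a ^ 3 = 1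
    · -- elementary abelian 3-group
      right; left
      letI : Module (ZMod 3) (Additive ↥N) :=
        AddCommGroup.zmodModule (n := 3) (by intro x; exact hexp x.toMul)
      let k := Module.finrank (ZMod 3) (Additive ↥N)
      let b := Module.finBasis (ZMod 3) (Additive ↥N)
      let lin : Additive ↥N ≃ₗ[ZMod 3] (Fin k → ZMod 3) := b.equivFun
      let addE : Additive ↥N ≃+ (Fin k → ZMod 3) := lin.toAddEquiv
      let mulE : Multiplicative (Additive ↥N) ≃* Multiplicative (Fin k → ZMod 3) :=
        AddEquiv.toMultiplicative addE
      let full : ↥N ≃* Multiplicative (Fin k → ZMod 3) := (mulMultAdd ↥N).trans mulE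
      exact ⟨k, ⟨e.trans (GDih.congr full)⟩⟩
    · by_cases hm5 : m = 5
      · right; right
        haveI f5 : Fact (Nat.Prime 5) := ⟨by norm_num⟩
        have hc5 : Nat.card ↥N = 5 := by rw [hNcard, hm5]
        haveI hcyc : IsCyclic ↥N := isCyclic_of_prime_card hc5
        let c : Multiplicative (ZMod (Nat.card ↥N)) ≃* ↥N := zmodCyclicMulEquiv hcyc
        let c5 : Multiplicative (ZMod 5) ≃* ↥N :=
          (AddEquiv.toMultiplicative (ZMod.ringEquivCongr hc5.symm).toAddEquiv).trans c
        exact ⟨(e.trans (GDih.congr c5.symm)).trans (GDih.toDihedral 5)⟩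
      · left
        apply conv
        push_neg at hexp
        have hnum := psi_comm_lower (A := ↥N) (by rw [hcardN']; exact hodd)
          (by rw [hcardN']; exact hm3) hexp (by rw [hcardN']; exact hm5)
        rw [hcardN', hpsiN] at hnum
        omega
  · -- many non-involutions outside N
    left
    apply conv
    have hCge3 : 3 ≤ C.card := by
      have hCeq : C = Finset.univ.filter (· ∈ (N ⊓ Subgroup.centralizer {t} : Subgroup G)) := by
        ext x
        simp only [hC, hNf, Finset.mem_filter, Finset.mem_univ, true_and, Subgroup.mem_inf,
          Subgroup.mem_centralizer_iff, Set.mem_singleton_iff]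
        constructor
        · rintro ⟨h1, h2⟩
          exact ⟨h1, fun h hh => hh ▸ h2⟩
        · rintro ⟨h1, h2⟩
          exact ⟨h1, h2 t rfl⟩
      have hCcard : C.card = Nat.card (N ⊓ Subgroup.centralizer {t} : Subgroup G) := by
        rw [hCeq, ← Fintype.card_subtype, ← Nat.card_eq_fintype_card]
      have hdvd : Nat.card (N ⊓ Subgroup.centralizer {t} : Subgroup G) ∣ m := by
        rw [← hNcard]; exact Subgroup.card_dvd_of_le inf_le_left
      have hCodd : ¬ 2 ∣ C.card := by
        intro h2
        rw [hCcard] at h2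
        exact hGodd (h2.trans hdvd)
      have hC0 : C.card ≠ 0 := (Finset.card_pos.mpr ⟨1, h1C⟩).ne'
      omega
    have hKm : 3 * K.card ≤ m := by
      calc 3 * K.card = K.card * 3 := by ring
      _ ≤ K.card * C.card := Nat.mul_le_mul_left _ hCge3
      _ ≤ m := hKC
    set I : Finset G := Finset.univ.filter (fun x => orderOf x = 2) with hI
    have hIK : I.card ≤ K.card := by
      apply Finset.card_le_card_of_injOn (fun x => x * t)
      · intro x hx
        rw [Finset.mem_coe, hI, Finset.mem_filter] at hx
        have hx2 := hx.2
        have hxne : x ≠ 1 := by intro h; rw [h, orderOf_one] at hx2; omega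
        have hxx : x * x = 1 := by
          have h := pow_orderOf_eq_one x; rwa [hx2, pow_two] at h
        have hxinv : x⁻¹ = x := inv_eq_of_mul_eq_one_right hxx
        have hxN : x ∉ N := by
          intro hmemx
          have h := hmemodd x hmemx
          rw [hx2] at h
          exact (by decide : ¬ Odd 2) h
        have hxtN : x * t ∈ N := by
          rw [hmem, map_mul, hnotmem x hxN, hft]; decide
        rw [Finset.mem_coe, hK, Finset.mem_filter]
        refine ⟨(hNfmem _).mpr hxtN, ?_⟩
        have h5 : t * (x * t) * t = t * x := by
          calc t * (x * t) * t = t * x * (t * t) := by simp only [mul_assoc]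
          _ = t * x := by rw [ht2, mul_one]
        rw [h5, mul_inv_rev, htinv, hxinv]
      · intro x hx y hy hxy
        simp only at hxy
        exact mul_right_cancel hxy
    have hcompl_card : Nfᶜ.card = m := by
      rw [Finset.card_compl, hNfcard, hcardF]; omega
    have hIsub : I ⊆ Nfᶜ := by
      intro x hx
      rw [hI, Finset.mem_filter] at hx
      rw [Finset.mem_compl]
      intro hxN
      have h := hmemodd x ((hNfmem x).mp hxN)
      rw [hx.2] at h
      exact (by decide : ¬ Odd 2) h
    have hfiltI : Nfᶜ.filter (fun x => orderOf x = 2) = I := by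
      ext x
      rw [Finset.mem_filter, hI, Finset.mem_filter]
      constructor
      · rintro ⟨h1, h2⟩
        exact ⟨Finset.mem_univ _, h2⟩
      · rintro ⟨-, h2⟩
        refine ⟨hIsub ?_, h2⟩
        rw [hI, Finset.mem_filter]
        exact ⟨Finset.mem_univ _, h2⟩
    have hsplitC := Finset.sum_filter_add_sum_filter_not Nfᶜ (fun x => orderOf x = 2) orderOf
    have hcardsplit := Finset.card_filter_add_card_filter_not
      (s := Nfᶜ) (p := fun x => orderOf x = 2)
    rw [hfiltI] at hsplitC hcardsplit
    have hsum2 : ∑ x ∈ I, orderOf x = 2 * I.card := by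
      have h : ∀ x ∈ I, orderOf x = 2 := fun x hx => by
        rw [hI, Finset.mem_filter] at hx; exact hx.2
      rw [Finset.sum_congr rfl h, Finset.sum_const, smul_eq_mul]
      ring
    have hsum6 : 6 * (Nfᶜ.filter (fun x => ¬ orderOf x = 2)).card ≤
        ∑ x ∈ Nfᶜ.filter (fun x => ¬ orderOf x = 2), orderOf x := by
      simpa [mul_comm] using Finset.card_nsmul_le_sum
        (Nfᶜ.filter (fun x => ¬ orderOf x = 2)) orderOf 6 (by
        intro x hx
        rw [Finset.mem_filter, Finset.mem_compl] at hx
        obtain ⟨hx1, hx2⟩ := hx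
        have hxN : x ∉ N := fun h => hx1 ((hNfmem x).mpr h)
        have heven : ¬ Odd (orderOf x) := fun ho => hxN (hoddmem x ho)
        rw [Nat.odd_iff] at heven
        have hpos : 0 < orderOf x := orderOf_pos x
        have h4 : orderOf x ≠ 4 := by
          intro h4
          have hdvd4 : (4:ℕ) ∣ 2 * m := by rw [← hcardF, ← h4]; exact orderOf_dvd_card
          obtain ⟨c0, hc0⟩ := hdvd4
          omega
        omega)
    have htot := Finset.sum_add_sum_compl Nf orderOf
    omega
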